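/- Let 𝒦 be a Kakeya set in an affine plane of order q ≥ 4 with |𝒦| > q² - ((q+1)√(q+1/4) - (3q+1)/2). Then 𝒦 contains a (q+1-k)-knot for some integer k with 0 ≤ k < √(q+1/4) - 1/2, and |𝒦| ∈ [q² - kq + k(k+1)/2, q² - kq + k²]. -/

import Mathlib

/-- An affine plane of order `q`: `q²` points, every line has `q` points, the lines fall
into `q+1` parallel classes each of which partitions the point set (every point lies on a
unique line of each class), and two non-parallel lines meet in exactly one point. -/
structure AffinePlaneOrder (q : ℕ) where
  Point : Type
  Line : Type
  mem : Point → Line → Prop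
  pointCount : Nat.card Point = q ^ 2
  lineSize : ∀ l : Line, {p : Point | mem p l}.ncard = q
  parClass : Line → Fin (q + 1)
  point_class : ∀ (p : Point) (c : Fin (q + 1)), ∃! l : Line, parClass l = c ∧ mem p l
  meet : ∀ l m : Line, parClass l ≠ parClass m → ∃! p : Point, mem p l ∧ mem p m

/-- A Kakeya line set: one line from each parallel class. -/
def IsKakeyaLines {q : ℕ} (A : AffinePlaneOrder q) (L : Fin (q + 1) → A.Line) : Prop :=
  ∀ c, A.parClass (L c) = c

/-- The Kakeya set determined by the lines `L`: all points covered by some line of `L`. -/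
def kakeyaSet {q : ℕ} (A : AffinePlaneOrder q) (L : Fin (q + 1) → A.Line) : Set A.Point :=
  {p | ∃ c, A.mem p (L c)}

/-- The number of lines of `L` through `p`; `p` is a `j`-knot when this equals `j`. -/
noncomputable def knotCount {q : ℕ} (A : AffinePlaneOrder q) (L : Fin (q + 1) → A.Line) (p : A.Point) : ℕ :=
  {c : Fin (q + 1) | A.mem p (L c)}.ncard

set_option maxRecDepth 8000
set_option maxHeartbeats 2000000

theorem nat_mul_pred (n : ℕ) : n * (n - 1) = n * n - n := by
  cases n with
  | zero => rfl
  | succ k => rw [Nat.succ_sub_one, Nat.mul_succ, Nat.add_sub_cancel]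

/-- If a Kakeya set in an affine plane of order `q ≥ 4` satisfies
`|𝒦| > q² - ((q+1)√(q+1/4) - (3q+1)/2)`, then it has a `(q+1-k)`-knot for some integer
`0 ≤ k < √(q+1/4) - 1/2`, and `|𝒦| ∈ [q² - kq + k(k+1)/2, q² - kq + k²]`. -/
theorem main_corollary {q : ℕ} (hq : 4 ≤ q) (A : AffinePlaneOrder q)
    (L : Fin (q + 1) → A.Line) (hL : IsKakeyaLines A L)
    (hsize : ((kakeyaSet A L).ncard : ℝ) >
      (q : ℝ) ^ 2 - (((q : ℝ) + 1) * Real.sqrt ((q : ℝ) + 1/4) - (3 * (q : ℝ) + 1) / 2)) :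
    ∃ k : ℕ, (k : ℝ) < Real.sqrt ((q : ℝ) + 1/4) - 1/2 ∧
      (∃ P : A.Point, knotCount A L P = q + 1 - k) ∧
      (q : ℝ) ^ 2 - k * q + k * (k + 1) / 2 ≤ ((kakeyaSet A L).ncard : ℝ) ∧
      ((kakeyaSet A L).ncard : ℝ) ≤ (q : ℝ) ^ 2 - k * q + k ^ 2 := by
  classical
  have hpos : 0 < Nat.card A.Point := by
    rw [A.pointCount]; positivity
  obtain ⟨hne, hfin⟩ := Nat.card_pos_iff.mp hpos
  haveI : Fintype A.Point := Fintype.ofFinite _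
  set J : A.Point → ℕ := fun p => (Finset.univ.filter fun c => A.mem p (L c)).card with hJdef
  have hknotJ : ∀ p, knotCount A L p = J p := by
    intro p
    rw [knotCount, Set.ncard_eq_toFinset_card', Set.toFinset_setOf]
  have lineCard : ∀ c, (Finset.univ.filter fun p => A.mem p (L c)).card = q := by
    intro c
    have h := A.lineSize (L c)
    rwa [Set.ncard_eq_toFinset_card', Set.toFinset_setOf] at h
  -- incidence count
  have hI1 : ∑ p : A.Point, J p = (q+1) * q := by
    calc ∑ p : A.Point, J p
        = ∑ p : A.Point, ∑ c : Fin (q+1), if A.mem p (L c) then 1 else 0 := by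
          refine Finset.sum_congr rfl fun p _ => ?_
          simp only [hJdef, Finset.card_filter]
      _ = ∑ c : Fin (q+1), ∑ p : A.Point, if A.mem p (L c) then 1 else 0 := Finset.sum_comm
      _ = ∑ c : Fin (q+1), q := by
          refine Finset.sum_congr rfl fun c _ => ?_
          rw [← Finset.card_filter]; exact lineCard c
      _ = (q+1) * q := by simp [Finset.card_univ, mul_comm]
  -- pair count
  have hmeet1 : ∀ c d : Fin (q+1), c ≠ d →
      (Finset.univ.filter fun p => A.mem p (L c) ∧ A.mem p (L d)).card = 1 := by
    intro c d hcd
    have hpar : A.parClass (L c) ≠ A.parClass (L d) := by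
      rw [hL c, hL d]; exact hcd
    obtain ⟨x, hx, hux⟩ := A.meet (L c) (L d) hpar
    rw [Finset.card_eq_one]
    refine ⟨x, ?_⟩
    ext y
    simp only [Finset.mem_filter, Finset.mem_univ, true_and, Finset.mem_singleton]
    constructor
    · intro hy; exact hux y hy
    · intro hy; subst hy; exact hx
  have hI2 : ∑ p : A.Point, J p * (J p - 1) = (q+1) * q := by
    have hoff : ∀ p : A.Point, (Finset.univ.filter fun c => A.mem p (L c)).offDiag
        = (Finset.univ : Finset (Fin (q+1))).offDiag.filter
          (fun cd => A.mem p (L cd.1) ∧ A.mem p (L cd.2)) := by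
      intro p
      ext ⟨c, d⟩
      simp only [Finset.mem_offDiag, Finset.mem_filter, Finset.mem_univ, true_and]
      tauto
    calc ∑ p : A.Point, J p * (J p - 1)
        = ∑ p : A.Point, ((Finset.univ.filter fun c => A.mem p (L c)).offDiag).card := by
          refine Finset.sum_congr rfl fun p _ => ?_
          rw [Finset.offDiag_card, hJdef]
          exact nat_mul_pred _
      _ = ∑ p : A.Point, ∑ cd ∈ (Finset.univ : Finset (Fin (q+1))).offDiag,
            if A.mem p (L cd.1) ∧ A.mem p (L cd.2) then 1 else 0 := by
          refine Finset.sum_congr rfl fun p _ => ?_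
          rw [hoff p, Finset.card_filter]
      _ = ∑ cd ∈ (Finset.univ : Finset (Fin (q+1))).offDiag, ∑ p : A.Point,
            if A.mem p (L cd.1) ∧ A.mem p (L cd.2) then 1 else 0 := Finset.sum_comm
      _ = ∑ cd ∈ (Finset.univ : Finset (Fin (q+1))).offDiag, 1 := by
          refine Finset.sum_congr rfl fun cd hcd => ?_
          rw [← Finset.card_filter]
          exact hmeet1 cd.1 cd.2 (Finset.mem_offDiag.mp hcd).2.2
      _ = (q+1) * q := by
          rw [Finset.sum_const, smul_eq_mul, mul_one, Finset.offDiag_card]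
          simp [Finset.card_univ, Nat.succ_mul, Nat.mul_succ]
  -- maximal knot
  obtain ⟨P, -, hPmax⟩ := Finset.exists_max_image (Finset.univ : Finset A.Point) J
    ⟨Classical.arbitrary _, Finset.mem_univ _⟩
  set m : ℕ := J P with hmdef
  have hmax : ∀ p : A.Point, J p ≤ m := fun p => hPmax p (Finset.mem_univ p)
  have hm1 : 1 ≤ m := by
    obtain ⟨p0, hp0⟩ := Finset.card_pos.mp (by rw [lineCard 0]; omega :
      0 < (Finset.univ.filter fun p => A.mem p (L 0)).card)
    have h0 : (0 : Fin (q+1)) ∈ Finset.univ.filter fun c => A.mem p0 (L c) := by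
      simp only [Finset.mem_filter, Finset.mem_univ, true_and]
      exact (Finset.mem_filter.mp hp0).2
    have : 0 < J p0 := Finset.card_pos.mpr ⟨0, h0⟩
    exact le_trans this (hmax p0)
  have hmq : m ≤ q + 1 := by
    have := Finset.card_filter_le (Finset.univ : Finset (Fin (q+1))) (fun c => A.mem P (L c))
    simpa [hmdef, hJdef] using this
  -- the Kakeya finset
  set KF : Finset A.Point := Finset.univ.filter (fun p => p ∈ kakeyaSet A L) with hKFdef
  have hNcard : (kakeyaSet A L).ncard = KF.card := by
    rw [Set.ncard_eq_toFinset_card']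
    congr 1
    ext p
    simp [hKFdef, Set.mem_toFinset]
  have hmemKF : ∀ p : A.Point, p ∈ KF ↔ 0 < J p := by
    intro p
    simp [hKFdef, kakeyaSet, hJdef, Finset.card_pos, Finset.filter_nonempty_iff]
    convert (Finset.mem_filter (s := Finset.univ) (p := fun x => ∃ c, A.mem x (L c)) (a := p)).trans (and_iff_right (Finset.mem_univ _))
    exact Finset.filter_congr_decidable _ _ _
  have hPKF : P ∈ KF := (hmemKF P).mpr (by omega)
  have hI1' : ∑ p ∈ KF, J p = (q+1) * q := by
    rw [← hI1]
    exact Finset.sum_subset (Finset.subset_univ KF)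
      (fun x _ hx => by by_contra h; exact hx ((hmemKF x).mpr (Nat.pos_of_ne_zero h)))
  have hI2' : ∑ p ∈ KF, J p * (J p - 1) = (q+1) * q := by
    rw [← hI2]
    refine Finset.sum_subset (Finset.subset_univ KF) (fun x _ hx => ?_)
    have : J x = 0 := by by_contra h; exact hx ((hmemKF x).mpr (Nat.pos_of_ne_zero h))
    simp [this]
  -- geometric upper bound: KF.card ≤ 1 + m*(q-1) + (q+1-m)*(q-m)
  have hgeoN : KF.card ≤ 1 + m * (q-1) + (q+1-m) * (q-m) := by
    set SP : Finset (Fin (q+1)) := Finset.univ.filter (fun c => A.mem P (L c)) with hSPdef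
    have hSPcard : SP.card = m := rfl
    set lineF : Fin (q+1) → Finset A.Point :=
      fun c => Finset.univ.filter (fun p => A.mem p (L c)) with hlineFdef
    set U : Finset A.Point := SP.biUnion lineF with hUdef
    set V : Finset A.Point := (Finset.univ \ SP).biUnion (fun c => lineF c \ U) with hVdef
    have hKFsub : KF ⊆ U ∪ V := by
      intro p hp
      have : 0 < J p := (hmemKF p).mp hp
      obtain ⟨c, hc⟩ := Finset.card_pos.mp this
      have hcmem : A.mem p (L c) := (Finset.mem_filter.mp hc).2
      by_cases hcU : p ∈ U
      · exact Finset.mem_union_left _ hcU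
      · refine Finset.mem_union_right _ ?_
        rw [hVdef]
        refine Finset.mem_biUnion.mpr ⟨c, ?_, ?_⟩
        · refine Finset.mem_sdiff.mpr ⟨Finset.mem_univ c, fun hcSP => hcU ?_⟩
          exact Finset.mem_biUnion.mpr ⟨c, hcSP, by
            simp [hlineFdef, hcmem]⟩
        · exact Finset.mem_sdiff.mpr ⟨by simp [hlineFdef, hcmem], hcU⟩
    have hUcard : U.card ≤ 1 + m * (q-1) := by
      have hsub : U ⊆ insert P (SP.biUnion (fun c => lineF c \ {P})) := by
        intro x hx
        obtain ⟨c, hcSP, hxc⟩ := Finset.mem_biUnion.mp hx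
        by_cases hxP : x = P
        · exact hxP ▸ Finset.mem_insert_self _ _
        · exact Finset.mem_insert_of_mem (Finset.mem_biUnion.mpr
            ⟨c, hcSP, Finset.mem_sdiff.mpr ⟨hxc, by simp [hxP]⟩⟩)
      calc U.card ≤ (insert P (SP.biUnion (fun c => lineF c \ {P}))).card :=
            Finset.card_le_card hsub
        _ ≤ 1 + (SP.biUnion (fun c => lineF c \ {P})).card :=
            (Finset.card_insert_le _ _).trans (by omega)
        _ ≤ 1 + ∑ c ∈ SP, (lineF c \ {P}).card :=
            Nat.add_le_add_left (Finset.card_biUnion_le) 1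
        _ = 1 + ∑ c ∈ SP, (q - 1) := by
            congr 1
            refine Finset.sum_congr rfl fun c hc => ?_
            have hc' := hc
            rw [hSPdef] at hc'
            have hPc : P ∈ lineF c := by
              simp only [hlineFdef, Finset.mem_filter, Finset.mem_univ, true_and]
              exact (Finset.mem_filter.mp hc').2
            rw [Finset.card_sdiff_of_subset (Finset.singleton_subset_iff.mpr hPc),
              Finset.card_singleton]
            congr 1
            simpa [hlineFdef] using lineCard c
        _ = 1 + m * (q-1) := by rw [Finset.sum_const, smul_eq_mul, hSPcard]
    have hVcard : V.card ≤ (q+1-m) * (q-m) := by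
      have hstep : ∀ c ∈ Finset.univ \ SP, (lineF c \ U).card ≤ q - m := by
        intro c hc
        have hcSP : c ∉ SP := (Finset.mem_sdiff.mp hc).2
        have hcP : ¬ A.mem P (L c) := by
          intro h; exact hcSP (by simp [hSPdef, h])
        -- the m lines through P meet lineF c in m distinct points
        have hinj : SP.card ≤ (lineF c ∩ U).card := by
          have hne' : ∀ c' ∈ SP, A.parClass (L c) ≠ A.parClass (L c') := by
            intro c' hc'
            rw [hL c, hL c']
            intro h; exact hcSP (h ▸ hc')
          refine Finset.card_le_card_of_injOn
            (fun c' => if h : A.parClass (L c) ≠ A.parClass (L c')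
              then (A.meet (L c) (L c') h).choose else P) ?_ ?_
          · intro c' hc'
            simp only [dif_pos (hne' c' hc')]
            obtain ⟨hx1, hx2⟩ := (A.meet (L c) (L c') (hne' c' hc')).choose_spec.1
            refine Finset.mem_inter.mpr ⟨?_, ?_⟩
            · simp only [hlineFdef, Finset.mem_filter, Finset.mem_univ, true_and]
              exact hx1
            · refine Finset.mem_biUnion.mpr ⟨c', hc', ?_⟩
              simp only [hlineFdef, Finset.mem_filter, Finset.mem_univ, true_and]
              exact hx2
          · intro c1 hc1' c2 hc2' heq
            have hc1 : c1 ∈ SP := hc1'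
            have hc2 : c2 ∈ SP := hc2'
            by_contra hne12
            simp only [dif_pos (hne' c1 hc1), dif_pos (hne' c2 hc2)] at heq
            obtain ⟨h11, h12⟩ := (A.meet (L c) (L c1) (hne' c1 hc1)).choose_spec.1
            obtain ⟨h21, h22⟩ := (A.meet (L c) (L c2) (hne' c2 hc2)).choose_spec.1
            set x := (A.meet (L c) (L c1) (hne' c1 hc1)).choose
            have hx2 : A.mem x (L c2) := heq ▸ h22
            have hpar12 : A.parClass (L c1) ≠ A.parClass (L c2) := by
              rw [hL c1, hL c2]
              intro h
              exact hne12 (by exact_mod_cast h)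
            obtain ⟨y, hy, huy⟩ := A.meet (L c1) (L c2) hpar12
            have hm1' := hc1
            have hm2' := hc2
            rw [hSPdef] at hm1' hm2'
            have hP1 : A.mem P (L c1) := (Finset.mem_filter.mp hm1').2
            have hP2 : A.mem P (L c2) := (Finset.mem_filter.mp hm2').2
            have hxP : x = P := by
              have h1 := huy x ⟨h12, hx2⟩
              have h2 := huy P ⟨hP1, hP2⟩
              rw [h1, h2]
            exact hcP (hxP ▸ h11)
        have hlc : (lineF c).card = q := by simpa [hlineFdef] using lineCard c
        have := Finset.card_sdiff_add_card_inter (lineF c) U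
        omega
      calc V.card ≤ ∑ c ∈ Finset.univ \ SP, (lineF c \ U).card := Finset.card_biUnion_le
        _ ≤ ∑ _c ∈ Finset.univ \ SP, (q - m) := Finset.sum_le_sum hstep
        _ = (q+1-m) * (q-m) := by
            rw [Finset.sum_const, smul_eq_mul, Finset.card_univ_diff, hSPcard,
              Fintype.card_fin]
    calc KF.card ≤ (U ∪ V).card := Finset.card_le_card hKFsub
      _ ≤ U.card + V.card := Finset.card_union_le _ _
      _ ≤ 1 + m * (q-1) + (q+1-m) * (q-m) := Nat.add_le_add hUcard hVcard
  -- move to the reals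
  set n : ℝ := ((kakeyaSet A L).ncard : ℝ) with hndef
  have hnKF : n = (KF.card : ℝ) := by rw [hndef, hNcard]
  have S1 : ∑ p ∈ KF, (J p : ℝ) = ((q:ℝ)+1) * q := by
    exact_mod_cast hI1'
  have SD : ∑ p ∈ KF, ((J p : ℝ) - 1) = ((q:ℝ)+1) * q - n := by
    rw [Finset.sum_sub_distrib, S1, Finset.sum_const, nsmul_eq_mul, mul_one, hnKF]
  have S2 : ∑ p ∈ KF, (J p : ℝ) * ((J p : ℝ) - 1) = ((q:ℝ)+1) * q := by
    have hcast : ∀ p ∈ KF, ((J p * (J p - 1) : ℕ) : ℝ) = (J p : ℝ) * ((J p : ℝ) - 1) := by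
      intro p hp
      have h1 : 1 ≤ J p := (hmemKF p).mp hp
      rw [Nat.cast_mul, Nat.cast_sub h1, Nat.cast_one]
    rw [← Finset.sum_congr rfl hcast]
    exact_mod_cast congrArg (Nat.cast : ℕ → ℝ) hI2'
  -- counting upper bound
  have hcount : ((q:ℝ)+1) * q ≤ (m:ℝ) * (((q:ℝ)+1) * q - n) := by
    rw [← SD, Finset.mul_sum, ← S2]
    refine Finset.sum_le_sum fun p hp => ?_
    have h1 : 1 ≤ J p := (hmemKF p).mp hp
    have h1' : (1:ℝ) ≤ (J p : ℝ) := by exact_mod_cast h1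
    have hle : (J p : ℝ) ≤ (m : ℝ) := by exact_mod_cast hmax p
    nlinarith
  -- convexity lower bound
  have hlow : ((q:ℝ)+1) * q - ((m:ℝ) - 1) - (((q:ℝ)+1) * q - (m:ℝ) * ((m:ℝ)-1)) / 2 ≤ n := by
    have hEr1 : ∑ p ∈ KF.erase P, ((J p : ℝ) - 1) = ((q:ℝ)+1) * q - n - ((m:ℝ) - 1) := by
      have h : ∑ p ∈ KF.erase P, ((J p : ℝ) - 1) + ((J P : ℝ) - 1)
          = ∑ p ∈ KF, ((J p : ℝ) - 1) := Finset.sum_erase_add KF _ hPKF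
      rw [← SD]
      have hm : (J P : ℝ) - 1 = (m:ℝ) - 1 := by rw [hmdef]
      linarith [h, hm]
    have hEr2 : ∑ p ∈ KF.erase P, (J p : ℝ) * ((J p : ℝ) - 1)
        = ((q:ℝ)+1) * q - (m:ℝ) * ((m:ℝ)-1) := by
      have h : ∑ p ∈ KF.erase P, ((J p : ℝ) * ((J p : ℝ) - 1)) + ((J P : ℝ) * ((J P : ℝ) - 1))
          = ∑ p ∈ KF, ((J p : ℝ) * ((J p : ℝ) - 1)) := Finset.sum_erase_add KF _ hPKF
      rw [← S2]
      have hm : (J P : ℝ) * ((J P : ℝ) - 1) = (m:ℝ) * ((m:ℝ)-1) := by rw [hmdef]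
      linarith [h, hm]
    have hconv : ∑ p ∈ KF.erase P, ((J p : ℝ) - 1)
        ≤ (∑ p ∈ KF.erase P, (J p : ℝ) * ((J p : ℝ) - 1)) / 2 := by
      rw [Finset.sum_div]
      refine Finset.sum_le_sum fun p hp => ?_
      have h1 : 1 ≤ J p := (hmemKF p).mp (Finset.mem_of_mem_erase hp)
      rcases Nat.lt_or_ge (J p) 2 with h2 | h2
      · have : J p = 1 := by omega
        rw [this]; norm_num
      · have h2' : (2:ℝ) ≤ (J p : ℝ) := by exact_mod_cast h2
        nlinarith
    linarith [hconv, hEr1, hEr2]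
  -- cast geometric bound
  set kN : ℕ := q + 1 - m with hkNdef
  have hkR : (kN : ℝ) = (q:ℝ) + 1 - (m:ℝ) := by
    rw [hkNdef]
    push_cast [Nat.cast_sub hmq]
    ring
  have hmR1 : (1:ℝ) ≤ (m:ℝ) := by exact_mod_cast hm1
  have hgeoR : n ≤ (q:ℝ)^2 - (kN:ℝ) * q + (kN:ℝ)^2 := by
    have key : n ≤ 1 + (m:ℝ) * ((q:ℝ)-1) + (kN:ℝ) * ((q:ℝ) - (m:ℝ)) := by
      by_cases hmle : m ≤ q
      · have := hgeoN
        rw [hnKF]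
        have hcast : ((1 + m * (q-1) + (q+1-m) * (q-m) : ℕ) : ℝ)
            = 1 + (m:ℝ) * ((q:ℝ)-1) + (kN:ℝ) * ((q:ℝ) - (m:ℝ)) := by
          push_cast [Nat.cast_sub hmle, Nat.cast_sub hmq, Nat.cast_sub (show 1 ≤ q by omega),
            hkNdef]
          ring
        rw [← hcast]
        exact_mod_cast this
      · have hm' : m = q + 1 := by omega
        have hk0 : kN = 0 := by omega
        have hcard : KF.card ≤ q^2 := by
          have h1 : KF.card ≤ Fintype.card A.Point := Finset.card_le_univ KF
          have h2 : Fintype.card A.Point = q^2 := by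
            rw [← Nat.card_eq_fintype_card, A.pointCount]
          omega
        rw [hnKF, hm', hk0]
        push_cast
        have : (KF.card : ℝ) ≤ ((q:ℝ))^2 := by exact_mod_cast hcard
        nlinarith
    have hid : (1:ℝ) + (m:ℝ) * ((q:ℝ)-1) + (kN:ℝ) * ((q:ℝ) - (m:ℝ))
        = (q:ℝ)^2 - (kN:ℝ) * q + (kN:ℝ)^2 := by
      have hm : (m:ℝ) = (q:ℝ) + 1 - (kN:ℝ) := by linarith [hkR]
      rw [hm]; ring
    linarith
  -- real arithmetic with s = sqrt(q+1/4) - 1/2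
  set t : ℝ := Real.sqrt ((q:ℝ) + 1/4) with htdef
  have ht2 : t^2 = (q:ℝ) + 1/4 := Real.sq_sqrt (by positivity)
  have ht0 : 0 ≤ t := Real.sqrt_nonneg _
  have hqR : (4:ℝ) ≤ (q:ℝ) := by exact_mod_cast hq
  have ht_ge2 : 2 ≤ t := by nlinarith
  set sR : ℝ := t - 1/2 with hsRdef
  have hq_s : (q:ℝ) = sR^2 + sR := by rw [hsRdef]; nlinarith [ht2]
  have hs32 : (3/2:ℝ) ≤ sR := by rw [hsRdef]; linarith
  have hs3 : ((q:ℝ)+1) * t - (3*(q:ℝ)+1)/2 = sR^3 := by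
    rw [hsRdef]
    linear_combination (3/2 - t) * ht2
  have hsize' : n > (q:ℝ)^2 - sR^3 := by
    rw [← hs3]
    exact hsize
  -- k < s
  have hklt : (kN : ℝ) < sR := by
    by_contra hge
    push_neg at hge
    have hcontra : n ≤ (q:ℝ)^2 - sR^3 := by
      by_cases hcase : (kN:ℝ) ≤ (q:ℝ) - sR
      · -- geometric regime
        have h2 : sR^3 ≤ (kN:ℝ) * q - (kN:ℝ)^2 := by
          nlinarith [mul_nonneg (sub_nonneg.mpr hge)
            (by linarith : (0:ℝ) ≤ (q:ℝ) - (kN:ℝ) - sR)]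
        linarith [hgeoR]
      · -- counting regime
        push_neg at hcase
        have hmsl : (m:ℝ) ≤ sR + 1 := by linarith [hkR]
        have hqq : (0:ℝ) < ((q:ℝ)+1) * q := by nlinarith
        have hnn : (0:ℝ) ≤ ((q:ℝ)+1) * q - n := by nlinarith [hcount, hmR1]
        have hstep : ((q:ℝ)+1) * q ≤ (sR+1) * (((q:ℝ)+1) * q - n) :=
          le_trans hcount (mul_le_mul_of_nonneg_right hmsl hnn)
        have hfact : ((q:ℝ)+1) * q = (sR+1) * ((q:ℝ) + sR^3) := by
          rw [hq_s]; ring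
        have hs1 : (0:ℝ) < sR + 1 := by linarith
        have hstep2 : (sR+1) * ((q:ℝ) + sR^3) ≤ (sR+1) * (((q:ℝ)+1) * q - n) := by
          rw [← hfact]; exact hstep
        have : (q:ℝ) + sR^3 ≤ ((q:ℝ)+1) * q - n := (mul_le_mul_iff_right₀ hs1).mp hstep2
        nlinarith [hq_s]
    linarith
  -- conclude
  refine ⟨kN, hklt, ⟨P, ?_⟩, ?_, ?_⟩
  · rw [hknotJ P, ← hmdef]
    omega
  · have hid : ((q:ℝ)+1) * q - ((m:ℝ) - 1) - (((q:ℝ)+1) * q - (m:ℝ) * ((m:ℝ)-1)) / 2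
        = (q:ℝ)^2 - (kN:ℝ) * q + (kN:ℝ) * ((kN:ℝ) + 1) / 2 := by
      have hm : (m:ℝ) = (q:ℝ) + 1 - (kN:ℝ) := by linarith [hkR]
      rw [hm]; ring
    linarith [hlow]
  · exact hgeoR
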